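/- For r ≥ 0, k ≥ 0 and n ≥ k+r+1, the total number of symmetric peaks of weight k+1 over all partial Dyck paths from (0,0) to (2n-r, r) equals ((r+1)·((n-k+1)(n-k-r) − 2) / ((2(n-k)-r-2)(2(n-k)-r-1))) · binom(2(n-k)-r-1, n-k). -/

import Mathlib

/-- A path (`true` = up step, `false` = down step) never goes below the x-axis. -/
def DyckNonneg (p : List Bool) : Prop :=
  ∀ q : List Bool, q <+: p → q.count false ≤ q.count true

/-- Partial Dyck paths from (0,0) to (2n-r, r) (n up steps, n-r down steps, never
below the x-axis) with a distinguished symmetric peak of weight k+1: a decomposition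
`A ++ u^{k+1} ++ d^{k+1} ++ B` with both runs maximal. -/
def PartialSymPeakMarked (n r k : ℕ) : Type :=
  { q : List Bool × List Bool //
      q.1.getLast? ≠ some true ∧
      q.2.head? ≠ some false ∧
      DyckNonneg (q.1 ++ List.replicate (k + 1) true ++ List.replicate (k + 1) false ++ q.2) ∧
      (q.1 ++ List.replicate (k + 1) true ++ List.replicate (k + 1) false ++ q.2).count true
        = n ∧
      (q.1 ++ List.replicate (k + 1) true ++ List.replicate (k + 1) false ++ q.2).length
        = 2 * n - r }

namespace SymPeakAux

open List

/-! ### Basic lemmas about `DyckNonneg` -/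

lemma ct_cons (x : Bool) (l : List Bool) :
    (x :: l).count true = l.count true + (if x = true then 1 else 0) := by
  cases x <;> simp [List.count_cons]

lemma cf_cons (x : Bool) (l : List Bool) :
    (x :: l).count false = l.count false + (if x = true then 0 else 1) := by
  cases x <;> simp [List.count_cons]

lemma ct_cons_t (l : List Bool) : (true :: l).count true = l.count true + 1 := by
  simp [List.count_cons]
lemma ct_cons_f (l : List Bool) : (false :: l).count true = l.count true := by
  simp [List.count_cons]
lemma cf_cons_t (l : List Bool) : (true :: l).count false = l.count false := by
  simp [List.count_cons]
lemma cf_cons_f (l : List Bool) : (false :: l).count false = l.count false + 1 := by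
  simp [List.count_cons]

lemma length_eq_counts (p : List Bool) : p.length = p.count true + p.count false := by
  induction p with
  | nil => simp
  | cons a l ih => rw [List.length_cons, ct_cons, cf_cons, ih]; cases a <;> simp <;> omega

lemma dn_prefix {p q : List Bool} (hq : q <+: p) (h : DyckNonneg p) : DyckNonneg q :=
  fun q' hq' => h q' (hq'.trans hq)

lemma dn_count {p : List Bool} (h : DyckNonneg p) : p.count false ≤ p.count true :=
  h p (List.prefix_refl p)

lemma dn_left {A B : List Bool} (h : DyckNonneg (A ++ B)) : DyckNonneg A :=
  dn_prefix (A.prefix_append B) h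

lemma prefix_append_cases {q A B : List Bool} (h : q <+: A ++ B) :
    q <+: A ∨ ∃ B', B' <+: B ∧ q = A ++ B' := by
  rcases le_or_gt q.length A.length with hl | hl
  · exact Or.inl (List.prefix_of_prefix_length_le h (A.prefix_append B) hl)
  · right
    obtain ⟨B', rfl⟩ := List.prefix_of_prefix_length_le (A.prefix_append B) h hl.le
    obtain ⟨rest, hrest⟩ := h
    rw [List.append_assoc] at hrest
    exact ⟨B', ⟨rest, by
      have := List.append_cancel_left hrest
      exact this⟩, rfl⟩

lemma dn_append_iff (A B : List Bool) :
    DyckNonneg (A ++ B) ↔ DyckNonneg A ∧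
      ∀ B', B' <+: B → (A ++ B').count false ≤ (A ++ B').count true := by
  constructor
  · intro h
    refine ⟨dn_left h, fun B' hB' => h _ ?_⟩
    obtain ⟨t, rfl⟩ := hB'
    exact ⟨t, by simp⟩
  · rintro ⟨h1, h2⟩ q hq
    rcases prefix_append_cases hq with h | ⟨B', hB', rfl⟩
    · exact h1 q h
    · exact h2 B' hB'

lemma prefix_cons_cases {q : List Bool} {x : Bool} {l : List Bool} (h : q <+: x :: l) :
    q = [] ∨ ∃ q', q' <+: l ∧ q = x :: q' := by
  rcases q with _ | ⟨y, q⟩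
  · exact Or.inl rfl
  · rw [List.cons_prefix_cons] at h
    exact Or.inr ⟨q, h.2, by rw [h.1]⟩

lemma dn_peak (A B : List Bool) :
    DyckNonneg (A ++ (true :: false :: B)) ↔ DyckNonneg (A ++ B) := by
  rw [dn_append_iff, dn_append_iff]
  refine and_congr_right fun hA => ?_
  have hcA := dn_count hA
  constructor
  · intro h B' hB'
    have := h (true :: false :: B') (by
      rw [List.cons_prefix_cons]; exact ⟨rfl, by rw [List.cons_prefix_cons]; exact ⟨rfl, hB'⟩⟩)
    simp only [List.count_append, ct_cons_t, ct_cons_f, cf_cons_t, cf_cons_f, reduceIte] at this ⊢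
    omega
  · intro h q hq
    rcases prefix_cons_cases hq with rfl | ⟨q', hq', rfl⟩
    · simpa using hcA
    rcases prefix_cons_cases hq' with rfl | ⟨q'', hq'', rfl⟩
    · simp only [List.count_append, ct_cons_t, ct_cons_f, cf_cons_t, cf_cons_f, List.count_nil, reduceIte]
      omega
    · have := h q'' hq''
      simp only [List.count_append, ct_cons_t, ct_cons_f, cf_cons_t, cf_cons_f, reduceIte] at this ⊢
      omega

lemma dn_mountain (j : ℕ) (A B : List Bool) :
    DyckNonneg (A ++ (List.replicate j true ++ (List.replicate j false ++ B))) ↔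
      DyckNonneg (A ++ B) := by
  induction j generalizing A B with
  | zero => simp
  | succ j ih =>
    have e : A ++ (List.replicate (j+1) true ++ (List.replicate (j+1) false ++ B))
        = (A ++ List.replicate j true) ++ (true :: false :: (List.replicate j false ++ B)) := by
      rw [List.replicate_succ' (n := j) (a := true), List.replicate_succ (n := j) (a := false)]
      simp
    rw [e, dn_peak]
    rw [show (A ++ List.replicate j true) ++ (List.replicate j false ++ B)
        = A ++ (List.replicate j true ++ (List.replicate j false ++ B)) by simp]
    exact ih A B

lemma dn_head {p : List Bool} (h : DyckNonneg p) : p.head? ≠ some false := by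
  rcases p with _ | ⟨x, p⟩
  · simp
  · rcases x with _ | _
    · intro _
      have := h [false] ⟨p, rfl⟩
      simp at this
    · simp

/-! ### Finiteness -/

lemma finite_aux {P : List Bool → Prop} (N : ℕ) (hP : ∀ p, P p → p.length ≤ N) :
    Finite {p : List Bool // P p} := by
  have : Finite {l : List Bool | l.length ≤ N} := (List.finite_length_le Bool N).to_subtype
  exact Finite.of_injective
    (fun p => (⟨p.1, hP p.1 p.2⟩ : {l : List Bool | l.length ≤ N}))
    (by rintro ⟨p, hp⟩ ⟨q, hq⟩ h; simpa [Subtype.ext_iff] using h)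

lemma finite_aux2 {P : List Bool × List Bool → Prop} (N : ℕ)
    (hP : ∀ p, P p → p.1.length ≤ N ∧ p.2.length ≤ N) :
    Finite {p : List Bool × List Bool // P p} := by
  have : Finite {l : List Bool | l.length ≤ N} := (List.finite_length_le Bool N).to_subtype
  exact Finite.of_injective
    (fun p => ((⟨p.1.1, (hP p.1 p.2).1⟩ : {l : List Bool | l.length ≤ N}),
               (⟨p.1.2, (hP p.1 p.2).2⟩ : {l : List Bool | l.length ≤ N})))
    (by rintro ⟨⟨p1, p2⟩, hp⟩ ⟨⟨q1, q2⟩, hq⟩ h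
        simp only [Prod.mk.injEq, Subtype.mk.injEq] at h
        simp [Prod.ext_iff, h.1, h.2])

/-! ### Dyck path counting -/

abbrev DkP (a b : ℕ) (p : List Bool) : Prop :=
  DyckNonneg p ∧ p.count true = a ∧ p.count false = b

abbrev Dk (a b : ℕ) := {p : List Bool // DkP a b p}

instance (a b : ℕ) : Finite (Dk a b) := by
  refine finite_aux (a + b) fun p hp => ?_
  rw [length_eq_counts, hp.2.1, hp.2.2]

lemma dk_empty (a b : ℕ) (h : a < b) : Nat.card (Dk a b) = 0 := by
  have : IsEmpty (Dk a b) := ⟨fun p => by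
    have := dn_count p.2.1
    rw [p.2.2.1, p.2.2.2] at this
    omega⟩
  exact Nat.card_of_isEmpty

lemma dk_b0 (a : ℕ) : Nat.card (Dk a 0) = 1 := by
  have : Unique (Dk a 0) := by
    refine ⟨⟨⟨List.replicate a true, ?_, by simp [List.count_replicate], by simp [List.count_replicate]⟩⟩, ?_⟩
    · intro q hq
      have := hq.sublist.count_le false
      have h0 : (List.replicate a true).count false = 0 := by
        simp [List.count_replicate]
      omega
    · rintro ⟨p, hdn, hct, hcf⟩
      have hall : ∀ x ∈ p, x = true := by
        intro x hx
        rcases x with _ | _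
        · exact absurd (List.count_pos_iff.2 hx) (by omega)
        · rfl
      have hrep : p = List.replicate p.length true := List.eq_replicate_of_mem hall
      have hlen : p.length = a := by rw [length_eq_counts, hct, hcf]; omega
      apply Subtype.ext
      show p = List.replicate a true
      rw [hrep, hlen]
  exact Nat.card_unique

lemma dn_concat {q : List Bool} {x : Bool}
    (h : DyckNonneg q) (hx : (q ++ [x]).count false ≤ (q ++ [x]).count true) :
    DyckNonneg (q ++ [x]) := by
  intro q' hq'
  rcases prefix_append_cases hq' with hp | ⟨B', hB', rfl⟩
  · exact h q' hp
  · rcases prefix_cons_cases hB' with rfl | ⟨q'', hq'', rfl⟩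
    · simpa using dn_count h
    · rw [List.prefix_nil] at hq''
      subst hq''
      exact hx

def grec (a b : ℕ) (hba : b ≤ a) : Dk a (b+1) ⊕ Dk (a+1) b → Dk (a+1) (b+1) := fun z =>
  match z with
  | .inl q => ⟨q.1 ++ [true], by
      obtain ⟨hdn, hct, hcf⟩ := q.2
      refine ⟨dn_concat hdn ?_, ?_, ?_⟩ <;>
        simp only [List.count_append, ct_cons_t, ct_cons_f, cf_cons_t, cf_cons_f,
          List.count_nil, hct, hcf] <;>
        omega⟩
  | .inr q => ⟨q.1 ++ [false], by
      obtain ⟨hdn, hct, hcf⟩ := q.2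
      refine ⟨dn_concat hdn ?_, ?_, ?_⟩ <;>
        simp only [List.count_append, ct_cons_t, ct_cons_f, cf_cons_t, cf_cons_f,
          List.count_nil, hct, hcf] <;>
        omega⟩

lemma dk_rec (a b : ℕ) (hba : b ≤ a) :
    Nat.card (Dk (a+1) (b+1)) = Nat.card (Dk a (b+1)) + Nat.card (Dk (a+1) b) := by
  classical
  have hbij : Function.Bijective (grec a b hba) := by
    constructor
    · rintro (⟨p, hp⟩ | ⟨p, hp⟩) (⟨q, hq⟩ | ⟨q, hq⟩) hpq <;>
        simp only [grec, Subtype.mk.injEq] at hpq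
      · simp [Subtype.ext_iff, (List.append_left_inj _).1 hpq]
      · exact absurd (congrArg List.getLast? hpq) (by simp)
      · exact absurd (congrArg List.getLast? hpq) (by simp)
      · simp [Subtype.ext_iff, (List.append_left_inj _).1 hpq]
    · rintro ⟨p, hdn, hct, hcf⟩
      have hne : p ≠ [] := by
        intro hnil; rw [hnil] at hct; simp at hct
      have hsplit := List.dropLast_append_getLast hne
      rcases hlast : p.getLast hne with _ | _
      · refine ⟨.inr ⟨p.dropLast, dn_prefix (List.dropLast_prefix p) hdn, ?_, ?_⟩, ?_⟩
        · have := hct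
          conv_lhs at this => rw [← hsplit]
          rw [hlast] at this
          simp only [List.count_append, ct_cons_t, ct_cons_f, cf_cons_t, cf_cons_f,
            List.count_nil] at this
          omega
        · have := hcf
          conv_lhs at this => rw [← hsplit]
          rw [hlast] at this
          simp only [List.count_append, ct_cons_t, ct_cons_f, cf_cons_t, cf_cons_f,
            List.count_nil] at this
          omega
        · simp only [grec]
          refine Subtype.ext ?_
          rw [hlast] at hsplit
          exact hsplit
      · refine ⟨.inl ⟨p.dropLast, dn_prefix (List.dropLast_prefix p) hdn, ?_, ?_⟩, ?_⟩
        · have := hct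
          conv_lhs at this => rw [← hsplit]
          rw [hlast] at this
          simp only [List.count_append, ct_cons_t, ct_cons_f, cf_cons_t, cf_cons_f,
            List.count_nil] at this
          omega
        · have := hcf
          conv_lhs at this => rw [← hsplit]
          rw [hlast] at this
          simp only [List.count_append, ct_cons_t, ct_cons_f, cf_cons_t, cf_cons_f,
            List.count_nil] at this
          omega
        · simp only [grec]
          refine Subtype.ext ?_
          rw [hlast] at hsplit
          exact hsplit
  rw [← Nat.card_congr (Equiv.ofBijective _ hbij), Nat.card_sum]

lemma dk_card : ∀ N a b : ℕ, a + b ≤ N → b ≤ a + 1 →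
    (Nat.card (Dk a b) : ℤ) = ((a+b).choose a : ℤ) - ((a+b).choose (a+1) : ℤ) := by
  intro N
  induction N with
  | zero =>
    intro a b h hb
    obtain rfl : a = 0 := by omega
    obtain rfl : b = 0 := by omega
    simp [dk_b0]
  | succ N ih =>
    intro a b hab hb
    rcases b with _ | b'
    · rw [dk_b0, Nat.add_zero, Nat.choose_self, Nat.choose_eq_zero_of_lt (by omega)]
      simp
    · rcases eq_or_lt_of_le hb with heq | hlt
      · rw [dk_empty a (b'+1) (by omega)]
        have h2 : a + (b'+1) = 2*a+1 := by omega
        rw [h2]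
        have := Nat.choose_symm (n := 2*a+1) (k := a+1) (by omega)
        rw [show 2*a+1 - (a+1) = a from by omega] at this
        rw [this]
        simp
      · obtain ⟨a', rfl⟩ : ∃ a', a = a' + 1 := ⟨a - 1, by omega⟩
        rw [dk_rec a' b' (by omega), Nat.cast_add,
          ih a' (b'+1) (by omega) (by omega), ih (a'+1) b' (by omega) (by omega)]
        have e1 : a' + (b'+1) = a'+b'+1 := by omega
        have e2 : a' + 1 + b' = a'+b'+1 := by omega
        have e3 : a' + 1 + (b'+1) = a'+b'+1+1 := by omega
        rw [e1, e2, e3]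
        have p1 := Nat.choose_succ_succ (a'+b'+1) a'
        have p2 := Nat.choose_succ_succ (a'+b'+1) (a'+1)
        have p1' := congrArg (fun x : ℕ => (x : ℤ)) p1
        have p2' := congrArg (fun x : ℕ => (x : ℤ)) p2
        push_cast at p1' p2'
        push_cast
        linarith

/-! ### Marked splittings -/

def trueP : List Bool → List Bool → Prop := fun _ _ => True

def pkP : List Bool → List Bool → Prop :=
  fun C D => C.getLast? = some true ∧ D.head? = some false

def goodP : List Bool → List Bool → Prop :=
  fun C D => C.getLast? ≠ some true ∧ D.head? ≠ some false

abbrev MkProp (a b : ℕ) (P : List Bool → List Bool → Prop) (q : List Bool × List Bool) : Prop :=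
  DyckNonneg (q.1 ++ q.2) ∧ (q.1 ++ q.2).count true = a ∧ (q.1 ++ q.2).count false = b ∧ P q.1 q.2

abbrev Mk (a b : ℕ) (P : List Bool → List Bool → Prop) :=
  {q : List Bool × List Bool // MkProp a b P q}

instance (a b : ℕ) (P : List Bool → List Bool → Prop) : Finite (Mk a b P) := by
  refine finite_aux2 (a + b) fun q hq => ?_
  have hlen : (q.1 ++ q.2).length = a + b := by
    rw [length_eq_counts, hq.2.1, hq.2.2.1]
  rw [List.length_append] at hlen
  omega

lemma ct_rep (m : ℕ) : (List.replicate m true).count true = m :=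
  List.count_replicate_self

lemma cf_rep (m : ℕ) : (List.replicate m false).count false = m :=
  List.count_replicate_self

lemma ct_rep_f (m : ℕ) : (List.replicate m false).count true = 0 :=
  List.count_eq_zero.2 (by intro h; have := List.eq_of_mem_replicate h; simp at this)

lemma cf_rep_t (m : ℕ) : (List.replicate m true).count false = 0 :=
  List.count_eq_zero.2 (by intro h; have := List.eq_of_mem_replicate h; simp at this)

/-- All splittings of Dyck paths. -/
def gsplit (a b : ℕ) : Dk a b × Fin (a + b + 1) → Mk a b trueP := fun x =>
  ⟨(x.1.1.take x.2.1, x.1.1.drop x.2.1), by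
    obtain ⟨hdn, hct, hcf⟩ := x.1.2
    exact ⟨by rw [List.take_append_drop]; exact hdn,
      by rw [List.take_append_drop]; exact hct,
      by rw [List.take_append_drop]; exact hcf, trivial⟩⟩

lemma card_mk_true (a b : ℕ) :
    Nat.card (Mk a b trueP) = (a + b + 1) * Nat.card (Dk a b) := by
  have hbij : Function.Bijective (gsplit a b) := by
    constructor
    · rintro ⟨⟨p, hp⟩, ⟨i, hi⟩⟩ ⟨⟨q, hq⟩, ⟨j, hj⟩⟩ hpq
      simp only [gsplit, Subtype.mk.injEq, Prod.mk.injEq] at hpq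
      obtain ⟨h1, h2⟩ := hpq
      have hpq' : p = q := by
        rw [← List.take_append_drop i p, ← List.take_append_drop j q, h1, h2]
      subst hpq'
      have hlp : p.length = a + b := by rw [length_eq_counts, hp.2.1, hp.2.2]
      have hij : i = j := by
        have := congrArg List.length h1
        simp only [List.length_take] at this
        omega
      subst hij
      rfl
    · rintro ⟨⟨C, D⟩, hdn, hct, hcf, -⟩
      have hlen : C.length + D.length = a + b := by
        have := length_eq_counts (C ++ D)
        rw [hct, hcf, List.length_append] at this
        omega
      refine ⟨(⟨C ++ D, hdn, hct, hcf⟩, ⟨C.length, by omega⟩), ?_⟩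
      simp only [gsplit]
      exact Subtype.ext (Prod.ext List.take_left List.drop_left)
  rw [← Nat.card_congr (Equiv.ofBijective _ hbij), Nat.card_prod,
    show Nat.card (Fin (a+b+1)) = a+b+1 from by simp [Nat.card_eq_fintype_card], mul_comm]

/-- Contracting a marked peak. -/
def gpk (a b : ℕ) : Mk a b trueP → Mk (a+1) (b+1) pkP := fun q =>
  ⟨(q.1.1 ++ [true], false :: q.1.2), by
    obtain ⟨hdn, hct, hcf, -⟩ := q.2
    have he : (q.1.1 ++ [true]) ++ (false :: q.1.2) = q.1.1 ++ (true :: false :: q.1.2) := by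
      simp
    refine ⟨?_, ?_, ?_, by simp, by simp⟩
    · rw [he, dn_peak]; exact hdn
    · rw [he]
      simp only [List.count_append, ct_cons_t, ct_cons_f] at *
      omega
    · rw [he]
      simp only [List.count_append, cf_cons_t, cf_cons_f] at *
      omega⟩

lemma card_mk_pk (a b : ℕ) :
    Nat.card (Mk (a+1) (b+1) pkP) = Nat.card (Mk a b trueP) := by
  have hbij : Function.Bijective (gpk a b) := by
    constructor
    · rintro ⟨⟨C1, D1⟩, h1⟩ ⟨⟨C2, D2⟩, h2⟩ hpq
      simp only [gpk, Subtype.mk.injEq, Prod.mk.injEq] at hpq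
      obtain ⟨ha, hb⟩ := hpq
      have : C1 = C2 := (List.append_left_inj _).1 ha
      have : D1 = D2 := by injection hb
      simp_all
    · rintro ⟨⟨C, D⟩, hdn, hct, hcf, hgl, hhd⟩
      obtain ⟨C', rfl⟩ : ∃ C', C = C' ++ [true] := by
        obtain ⟨ys, hy⟩ := List.getLast?_eq_some_iff.1 hgl
        exact ⟨ys, hy⟩
      obtain ⟨D', rfl⟩ : ∃ D', D = false :: D' := by
        obtain ⟨ys, hy⟩ := List.head?_eq_some_iff.1 hhd
        exact ⟨ys, hy⟩
      have he : (C' ++ [true]) ++ (false :: D') = C' ++ (true :: false :: D') := by simp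
      rw [he] at hdn hct hcf
      refine ⟨⟨(C', D'), (dn_peak C' D').1 hdn, ?_, ?_, trivial⟩, rfl⟩
      · simp only [List.count_append, ct_cons_t, ct_cons_f] at *
        omega
      · simp only [List.count_append, cf_cons_t, cf_cons_f] at *
        omega
  exact Nat.card_congr (Equiv.ofBijective _ hbij).symm

/-! ### takeWhile/dropWhile helpers -/

lemma tw_head_false {D : List Bool} (h : D.head? ≠ some false) :
    D.takeWhile (fun x => !x) = [] ∧ D.dropWhile (fun x => !x) = D := by
  rcases D with _ | ⟨x, D⟩
  · simp
  · rcases x with _ | _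
    · simp at h
    · simp [List.takeWhile_cons, List.dropWhile_cons]

lemma head_dropWhile (l : List Bool) : (l.dropWhile (fun x => !x)).head? ≠ some false := by
  induction l with
  | nil => simp
  | cons x l ih =>
    rcases x with _ | _
    · simpa [List.dropWhile_cons] using ih
    · simp [List.dropWhile_cons]

lemma tw_all_false (l : List Bool) :
    l.takeWhile (fun x => !x) = List.replicate (l.takeWhile (fun x => !x)).length false := by
  apply List.eq_replicate_of_mem
  intro b hb
  have := List.mem_takeWhile_imp hb
  rcases b with _ | _
  · rfl
  · simp at this

lemma tw_rep (j : ℕ) (l : List Bool) :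
    (List.replicate j false ++ l).takeWhile (fun x => !x)
        = List.replicate j false ++ l.takeWhile (fun x => !x)
      ∧ (List.replicate j false ++ l).dropWhile (fun x => !x) = l.dropWhile (fun x => !x) := by
  induction j with
  | zero => simp
  | succ j ih =>
    simp only [List.replicate_succ, List.cons_append, List.takeWhile_cons, List.dropWhile_cons]
    simpa using ih

lemma getLast?_rep_succ (j : ℕ) : (List.replicate (j+1) false).getLast? = some false := by
  rw [List.replicate_succ']
  exact List.getLast?_concat

lemma rep_cancel : ∀ j₁ j₂ : ℕ, ∀ l₁ l₂ : List Bool,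
    List.replicate j₁ false ++ l₁ = List.replicate j₂ false ++ l₂ →
    l₁.head? ≠ some false → l₂.head? ≠ some false → j₁ = j₂ ∧ l₁ = l₂ := by
  intro j₁
  induction j₁ with
  | zero =>
    intro j₂ l₁ l₂ h h1 h2
    rcases j₂ with _ | j₂
    · simpa using h
    · rw [List.replicate_succ] at h
      simp only [List.replicate_zero, List.nil_append, List.cons_append] at h
      rw [h] at h1
      simp at h1
  | succ j ih =>
    intro j₂ l₁ l₂ h h1 h2
    rcases j₂ with _ | j₂
    · rw [List.replicate_succ] at h
      simp only [List.replicate_zero, List.nil_append, List.cons_append] at h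
      rw [← h] at h2
      simp at h2
    · rw [List.replicate_succ, List.replicate_succ] at h
      simp only [List.cons_append, List.cons.injEq] at h
      obtain ⟨je, le⟩ := ih j₂ l₁ l₂ h.2 h1 h2
      exact ⟨by omega, le⟩

lemma exists_decomp : ∀ C : List Bool, DyckNonneg C → C ≠ [] → C.getLast? ≠ some true →
    ∃ C' j, C = C' ++ List.replicate (j+1) false ∧ C'.getLast? = some true := by
  intro C
  induction C using List.reverseRecOn with
  | nil => intro _ h _; exact absurd rfl h
  | append_singleton C₀ x ih =>
    intro hdn _ hgl
    have hx : x = false := by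
      rcases x with _ | _
      · rfl
      · rw [List.getLast?_concat] at hgl
        simp at hgl
    subst hx
    rcases eq_or_ne C₀ [] with rfl | h₀
    · exfalso
      have := hdn [false] (by simp)
      simp [List.count_cons] at this
    · by_cases hg : C₀.getLast? = some true
      · exact ⟨C₀, 0, by simp, hg⟩
      · obtain ⟨C', j, hC, hC'⟩ := ih (dn_left hdn) h₀ hg
        refine ⟨C', j+1, ?_, hC'⟩
        rw [hC, List.append_assoc, ← List.replicate_succ']

/-- The good-splitting bijection: a good split is either the trivial initial split
or comes from a marked peak by sliding to the end of the descent. -/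
def ggood (a b : ℕ) : Dk a b ⊕ Mk a b pkP → Mk a b goodP := fun z =>
  match z with
  | .inl p => ⟨([], p.1), by
      obtain ⟨hdn, hct, hcf⟩ := p.2
      exact ⟨by simpa using hdn, by simpa using hct, by simpa using hcf,
        by simp [goodP], by simpa [goodP] using dn_head hdn⟩⟩
  | .inr q => ⟨(q.1.1 ++ q.1.2.takeWhile (fun x => !x), q.1.2.dropWhile (fun x => !x)), by
      obtain ⟨hdn, hct, hcf, hgl, hhd⟩ := q.2
      have he : (q.1.1 ++ q.1.2.takeWhile (fun x => !x)) ++ q.1.2.dropWhile (fun x => !x)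
          = q.1.1 ++ q.1.2 := by
        rw [List.append_assoc, List.takeWhile_append_dropWhile]
      refine ⟨by rw [he]; exact hdn, by rw [he]; exact hct, by rw [he]; exact hcf, ?_,
        head_dropWhile _⟩
      have htw : q.1.2.takeWhile (fun x => !x) ≠ [] := by
        obtain ⟨ys, hy⟩ := List.head?_eq_some_iff.1 hhd
        rw [hy]
        simp [List.takeWhile_cons]
      obtain ⟨m, hm⟩ : ∃ m, (q.1.2.takeWhile (fun x => !x)).length = m + 1 := by
        rcases hl : (q.1.2.takeWhile (fun x => !x)).length with _ | m
        · exact absurd (List.length_eq_zero_iff.1 hl) htw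
        · exact ⟨m, rfl⟩
      have hrep := tw_all_false q.1.2
      rw [hm] at hrep
      have : (q.1.1 ++ q.1.2.takeWhile (fun x => !x)).getLast? = some false := by
        rw [List.getLast?_append, hrep, getLast?_rep_succ]
        rfl
      simp [this]⟩

lemma card_mk_good (a b : ℕ) :
    Nat.card (Mk a b goodP) = Nat.card (Dk a b) + Nat.card (Mk a b pkP) := by
  have hbij : Function.Bijective (ggood a b) := by
    constructor
    · rintro (⟨p, hp⟩ | ⟨⟨C1, D1⟩, h1⟩) (⟨q, hq⟩ | ⟨⟨C2, D2⟩, h2⟩) hpq <;>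
        simp only [ggood, Subtype.mk.injEq, Prod.mk.injEq] at hpq
      · exact congrArg Sum.inl (Subtype.ext hpq.2)
      · exfalso
        have hC2 : C2 ≠ [] := by
          intro hnil
          have := h2.2.2.2.1
          rw [hnil] at this
          simp [pkP] at this
        exact List.append_ne_nil_of_left_ne_nil hC2 _ hpq.1.symm
      · exfalso
        have hC1 : C1 ≠ [] := by
          intro hnil
          have := h1.2.2.2.1
          rw [hnil] at this
          simp [pkP] at this
        exact List.append_ne_nil_of_left_ne_nil hC1 _ hpq.1
      · obtain ⟨ha, hb⟩ := hpq
        have hr := congrArg List.reverse ha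
        simp only [List.reverse_append] at hr
        rw [tw_all_false D1, tw_all_false D2, List.reverse_replicate, List.reverse_replicate]
          at hr
        have hh1 : C1.reverse.head? ≠ some false := by
          rw [List.head?_reverse, h1.2.2.2.1]; simp
        have hh2 : C2.reverse.head? ≠ some false := by
          rw [List.head?_reverse, h2.2.2.2.1]; simp
        obtain ⟨hje, hle⟩ := rep_cancel _ _ _ _ hr hh1 hh2
        have hC : C1 = C2 := List.reverse_injective hle
        have hD : D1 = D2 := by
          rw [← List.takeWhile_append_dropWhile (p := fun x => !x) (l := D1),
            ← List.takeWhile_append_dropWhile (p := fun x => !x) (l := D2),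
            tw_all_false D1, tw_all_false D2, hje, hb]
        subst hC; subst hD
        rfl
    · rintro ⟨⟨C, D⟩, hdn, hct, hcf, hgl, hhd⟩
      rcases eq_or_ne C [] with rfl | hneC
      · exact ⟨.inl ⟨D, by simpa using hdn, by simpa using hct, by simpa using hcf⟩,
          Subtype.ext (by simp [ggood])⟩
      · obtain ⟨C', j, rfl, hC'⟩ := exists_decomp C (dn_left hdn) hneC hgl
        refine ⟨.inr ⟨(C', List.replicate (j+1) false ++ D), ?_, ?_, ?_, hC',
          by simp [List.replicate_succ]⟩, ?_⟩
        · rw [← List.append_assoc]; exact hdn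
        · rw [← List.append_assoc]; exact hct
        · rw [← List.append_assoc]; exact hcf
        · obtain ⟨htwD, hdwD⟩ := tw_head_false (D := D) hhd
          obtain ⟨htw, hdw⟩ := tw_rep (j+1) D
          simp only [ggood]
          apply Subtype.ext
          show (C' ++ List.takeWhile (fun x => !x) (List.replicate (j+1) false ++ D),
                List.dropWhile (fun x => !x) (List.replicate (j+1) false ++ D))
              = (C' ++ List.replicate (j+1) false, D)
          rw [htw, hdw, htwD, hdwD]
          simp
  rw [← Nat.card_congr (Equiv.ofBijective _ hbij), Nat.card_sum]

lemma mk_pk_b0 (a : ℕ) : Nat.card (Mk a 0 pkP) = 0 := by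
  have : IsEmpty (Mk a 0 pkP) := by
    refine ⟨fun q => ?_⟩
    obtain ⟨hdn, hct, hcf, hgl, hhd⟩ := q.2
    obtain ⟨ys, hy⟩ := List.head?_eq_some_iff.1 hhd
    have : (q.1.1 ++ q.1.2).count false ≠ 0 := by
      rw [List.count_append, hy, cf_cons_f]
      omega
    exact this hcf
  exact Nat.card_of_isEmpty

/-! ### Transfer from the original type -/

lemma card_mark (n r k t : ℕ) (hn : n = k + r + 1 + t) :
    Nat.card (PartialSymPeakMarked n r k) = Nat.card (Mk (r + t) t goodP) := by
  apply Nat.card_congr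
  refine Equiv.subtypeEquivRight ?_
  rintro ⟨A, B⟩
  dsimp only [MkProp, goodP]
  rw [List.append_assoc, List.append_assoc]
  have hdm := dn_mountain (k+1) A B
  have hct : (A ++ (List.replicate (k+1) true ++ (List.replicate (k+1) false ++ B))).count true
      = (A ++ B).count true + (k+1) := by
    simp only [List.count_append, ct_rep, ct_rep_f]
    omega
  have hcf : (A ++ (List.replicate (k+1) true ++ (List.replicate (k+1) false ++ B))).count false
      = (A ++ B).count false + (k+1) := by
    simp only [List.count_append, cf_rep, cf_rep_t]
    omega
  have hlen := length_eq_counts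
    (A ++ (List.replicate (k+1) true ++ (List.replicate (k+1) false ++ B)))
  have hlab := length_eq_counts (A ++ B)
  constructor
  · rintro ⟨hgl, hhd, hdn, hc, hl⟩
    refine ⟨hdm.1 hdn, ?_, ?_, hgl, hhd⟩ <;> omega
  · rintro ⟨hdn, hc, hcf', hgl, hhd⟩
    refine ⟨hgl, hhd, hdm.2 hdn, ?_, ?_⟩ <;> omega

end SymPeakAux

theorem partial_sym_peak_count (n k r : ℕ) (h : k + r + 1 ≤ n) :
    (Nat.card (PartialSymPeakMarked n r k) : ℤ)
        * ((2 * ((n : ℤ) - k) - r - 2) * (2 * ((n : ℤ) - k) - r - 1))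
      = ((r : ℤ) + 1) * (((n : ℤ) - k + 1) * ((n : ℤ) - k - r) - 2)
          * (Nat.choose (2 * (n - k) - r - 1) (n - k) : ℤ) := by
  open SymPeakAux in
  obtain ⟨t, rfl⟩ : ∃ t, n = k + r + 1 + t := ⟨n - (k+r+1), by omega⟩
  rcases t with _ | d
  · -- boundary case t = 0
    rw [card_mark _ r k 0 rfl, card_mk_good, mk_pk_b0, dk_b0,
      show 2 * ((k+r+1+0) - k) - r - 1 = r + 1 from by omega,
      show (k+r+1+0) - k = r + 1 from by omega, Nat.choose_self]
    push_cast
    ring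
  · -- main case t = d + 1
    rw [card_mark _ r k (d+1) rfl, card_mk_good,
      show r + (d+1) = (r+d) + 1 from by omega, card_mk_pk (r+d) d, card_mk_true,
      show 2 * ((k+r+1+(d+1)) - k) - r - 1 = r + 2*d + 3 from by omega,
      show (k+r+1+(d+1)) - k = r + d + 2 from by omega]
    have hD1 := dk_card (r+2*d+2) (r+d+1) (d+1) (by omega) (by omega)
    have hD2 := dk_card (r+2*d) (r+d) d (by omega) (by omega)
    rw [show r+d+1 + (d+1) = r+2*d+2 from by omega,
      show r+d+1+1 = r+d+2 from by omega] at hD1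
    rw [show r+d + d = r+2*d from by omega] at hD2
    -- choose identities
    have F0n := Nat.choose_succ_right_eq (r+2*d) (r+d)
    rw [show r+2*d - (r+d) = d from by omega] at F0n
    have F1n := Nat.choose_succ_succ (r+2*d) (r+d)
    simp only [Nat.succ_eq_add_one] at F1n
    have F2n := Nat.choose_succ_right_eq (r+2*d+1) (r+d+1)
    rw [show r+2*d+1 - (r+d+1) = d from by omega,
      show r+d+1+1 = r+d+2 from by omega] at F2n
    have F3n := Nat.choose_succ_right_eq (r+2*d+1) (r+d)
    rw [show r+2*d+1 - (r+d) = d+1 from by omega] at F3n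
    have F4n := Nat.choose_succ_succ (r+2*d+1) (r+d)
    simp only [Nat.succ_eq_add_one] at F4n
    rw [show r+2*d+1+1 = r+2*d+2 from by omega] at F4n
    have F5n := Nat.choose_succ_succ (r+2*d+1) (r+d+1)
    simp only [Nat.succ_eq_add_one] at F5n
    rw [show r+2*d+1+1 = r+2*d+2 from by omega, show r+d+1+1 = r+d+2 from by omega] at F5n
    have F6n := Nat.choose_succ_succ (r+2*d+2) (r+d+1)
    simp only [Nat.succ_eq_add_one] at F6n
    rw [show r+2*d+2+1 = r+2*d+3 from by omega, show r+d+1+1 = r+d+2 from by omega] at F6n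
    have F0 := congrArg (fun x : ℕ => (x : ℤ)) F0n; push_cast at F0
    have F1 := congrArg (fun x : ℕ => (x : ℤ)) F1n; push_cast at F1
    have F2 := congrArg (fun x : ℕ => (x : ℤ)) F2n; push_cast at F2
    have F3 := congrArg (fun x : ℕ => (x : ℤ)) F3n; push_cast at F3
    have F4 := congrArg (fun x : ℕ => (x : ℤ)) F4n; push_cast at F4
    have F5 := congrArg (fun x : ℕ => (x : ℤ)) F5n; push_cast at F5
    have F6 := congrArg (fun x : ℕ => (x : ℤ)) F6n; push_cast at F6
    have h1 : (((r+2*d).choose (r+d) : ℤ) - ((r+2*d).choose (r+d+1) : ℤ)) * ((r:ℤ)+2*d+1)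
        = ((r:ℤ)+1) * ((r+2*d+1).choose (r+d+1) : ℤ) := by
      linear_combination (-2 : ℤ) * F0 - ((r:ℤ)+1) * F1
    push_cast
    rw [hD1, hD2]
    apply mul_right_cancel₀ (b := (((d:ℤ)+1) * ((r:ℤ)+(d:ℤ)+2))) (by positivity)
    have A1 : ℤ := ((r:ℤ)+2*d+2) * ((r:ℤ)+2*d+3)
    linear_combination
      ((((r:ℤ)+2*d+2) * ((r:ℤ)+2*d+3)) * (((d:ℤ)+1) * ((r:ℤ)+d+2))) * h1
      - (((r:ℤ)+1) * (((r:ℤ)+d+3) * ((d:ℤ)+2) - 2) * (((d:ℤ)+1) * ((r:ℤ)+d+2))) * F6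
      + (((((r:ℤ)+2*d+2) * ((r:ℤ)+2*d+3)) - ((r:ℤ)+1) * (((r:ℤ)+d+3) * ((d:ℤ)+2) - 2))
          * (((d:ℤ)+1) * ((r:ℤ)+d+2))) * F4
      - (((((r:ℤ)+2*d+2) * ((r:ℤ)+2*d+3)) + ((r:ℤ)+1) * (((r:ℤ)+d+3) * ((d:ℤ)+2) - 2))
          * (((d:ℤ)+1) * ((r:ℤ)+d+2))) * F5
      - (((((r:ℤ)+2*d+2) * ((r:ℤ)+2*d+3)) - ((r:ℤ)+1) * (((r:ℤ)+d+3) * ((d:ℤ)+2) - 2))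
          * ((r:ℤ)+d+2)) * F3
      - (((((r:ℤ)+2*d+2) * ((r:ℤ)+2*d+3)) + ((r:ℤ)+1) * (((r:ℤ)+d+3) * ((d:ℤ)+2) - 2))
          * ((d:ℤ)+1)) * F2
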